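/- Let T be a finite tree (a connected acyclic simple graph), let r be a vertex of T, and let p be a closed walk from r to r in which every dart of T appears exactly once. Let v₁, v₂, …, v_{2n−1} be the sequence of vertices visited by p (so v₁ = v_{2n−1} = r), and for each vertex v let i_v := min{i : v_i = v} and j_v := max{j : v_j = v}. Then for all vertices u and v, the vertex v lies on the unique path in T from u to r if and only if i_v ≤ i_u and j_u ≤ j_v. -/

import Mathlib

open SimpleGraph Walk List

set_option linter.unusedSectionVars false

section Aux
variable {V : Type*} [DecidableEq V] {T : SimpleGraph V}

lemma split_at_dart {x y : V} (p : T.Walk x y) (d : T.Dart) (hd : d ∈ p.darts) :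
    ∃ (q1 : T.Walk x d.fst) (q2 : T.Walk d.snd y),
      p = q1.append (Walk.cons d.adj q2) := by
  induction p with
  | nil => simp at hd
  | cons h q ih =>
    rw [Walk.darts_cons, List.mem_cons] at hd
    rcases hd with hd | hd
    · subst hd
      exact ⟨Walk.nil, q, rfl⟩
    · obtain ⟨q1, q2, heq⟩ := ih hd
      exact ⟨Walk.cons h q1, q2, by rw [Walk.cons_append, ← heq]⟩

lemma const_on (P : V → Prop) :
    ∀ {x y : V} (c : T.Walk x y),
      (∀ d ∈ c.darts, (P d.fst ↔ P d.snd)) → ∀ z ∈ c.support, (P z ↔ P x) := by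
  intro x y c
  induction c with
  | nil => intro _ z hz; simp at hz; subst hz; rfl
  | @cons a b y h q ih =>
    intro hd z hz
    rw [Walk.support_cons, List.mem_cons] at hz
    have hab : P a ↔ P b := hd ⟨(a, b), h⟩ (by simp)
    rcases hz with rfl | hz
    · rfl
    · have := ih (fun d hdm => hd d (by simp [hdm])) z hz
      rw [this, hab]

end Aux

/-- The index of the first occurrence of `v` in the list `l`. -/
def firstOcc {V : Type*} [DecidableEq V] (l : List V) (v : V) : ℕ := l.idxOf v

/-- The index of the last occurrence of `v` in the list `l`. -/
def lastOcc {V : Type*} [DecidableEq V] (l : List V) (v : V) : ℕ :=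
  l.length - 1 - l.reverse.idxOf v

theorem euler_tour_interval_labelling {V : Type*} [Fintype V] [DecidableEq V]
    (T : SimpleGraph V) (hT : T.IsTree) (r : V)
    (p : T.Walk r r) (hp : p.darts.Nodup) (hall : ∀ d : T.Dart, d ∈ p.darts)
    (u v : V) (q : T.Walk u r) (hq : q.IsPath) :
    v ∈ q.support ↔
      firstOcc p.support v ≤ firstOcc p.support u ∧
        lastOcc p.support u ≤ lastOcc p.support v := by
  classical
  -- uniqueness of paths
  have puniq : ∀ {a : V} (c1 c2 : T.Walk a r), c1.IsPath → c2.IsPath → c1 = c2 := by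
    intro a c1 c2 h1 h2
    obtain ⟨c0, -, hu⟩ := hT.existsUnique_path a r
    rw [hu c1 h1, hu c2 h2]
  have pex : ∀ a : V, ∃ c : T.Walk a r, c.IsPath := fun a =>
    (hT.existsUnique_path a r).exists
  by_cases hvr : v = r
  · subst hvr
    have h1 : firstOcc p.support v = 0 := by
      unfold firstOcc
      rw [p.support_eq_cons]
      exact List.idxOf_cons_self
    have h2 : lastOcc p.support v = p.support.length - 1 := by
      unfold lastOcc
      rw [← p.support_reverse, p.reverse.support_eq_cons]
      simp
    refine ⟨fun _ => ⟨?_, ?_⟩, fun _ => q.end_mem_support⟩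
    · rw [h1]; exact Nat.zero_le _
    · rw [h2]; exact Nat.sub_le _ _
  -- main case
  obtain ⟨c, hc⟩ := pex v
  cases c with
  | nil => exact absurd rfl hvr
  | @cons _ w _ hadj c' =>
    -- the ancestor predicate
    set P : V → Prop := fun x => ∃ c0 : T.Walk x r, c0.IsPath ∧ v ∈ c0.support with hP
    have hPiff : ∀ (x : V) (c0 : T.Walk x r), c0.IsPath → (P x ↔ v ∈ c0.support) := by
      intro x c0 h0
      constructor
      · rintro ⟨c1, h1, hv1⟩
        rwa [puniq c1 c0 h1 h0] at hv1
      · intro hv0; exact ⟨c0, h0, hv0⟩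
    have hPv : P v := ⟨Walk.cons hadj c', hc, Walk.start_mem_support _⟩
    have hPr : ¬ P r := by
      rw [hPiff r Walk.nil (Walk.IsPath.nil)]
      simp [hvr]
    have hPw : ¬ P w := by
      rw [hPiff w c' hc.of_cons]
      have := hc.support_nodup
      rw [Walk.support_cons] at this
      exact (List.nodup_cons.mp this).1
    -- the two crossing darts
    set d2 : T.Dart := ⟨(v, w), hadj⟩ with hd2
    set d1 : T.Dart := ⟨(w, v), hadj.symm⟩ with hd1
    have hcore : ∀ (a b : V), T.Adj a b → P a → ¬ P b → a = v ∧ b = w := by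
      intro a b hab hPa hPb
      obtain ⟨cb, hcb⟩ := pex b
      have hvb : v ∉ cb.support := fun h => hPb ⟨cb, hcb, h⟩
      have hanb : a ∉ cb.support := by
        intro h
        have hdp : (cb.dropUntil a h).IsPath := hcb.dropUntil h
        have := (hPiff a _ hdp).mp hPa
        exact hvb (Walk.support_dropUntil_subset cb h this)
      have hc2 : (Walk.cons hab cb).IsPath := hcb.cons hanb
      have hva : v = a := by
        have := (hPiff a _ hc2).mp hPa
        rw [Walk.support_cons, List.mem_cons] at this
        rcases this with h | h
        · exact h
        · exact absurd h hvb
      subst hva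
      refine ⟨rfl, ?_⟩
      have heq : Walk.cons hab cb = Walk.cons hadj c' := puniq _ _ hc2 hc
      have := congrArg (fun z => Walk.getVert z 1) heq
      simpa [Walk.getVert_cons_succ, Walk.getVert_zero] using this
    have hcross : ∀ d : T.Dart, ¬ (P d.fst ↔ P d.snd) → d = d1 ∨ d = d2 := by
      intro d hd
      by_cases h1 : P d.fst
      · have h2 : ¬ P d.snd := fun h => hd ⟨fun _ => h, fun _ => h1⟩
        obtain ⟨ha, hb⟩ := hcore d.fst d.snd d.adj h1 h2
        right; ext <;> simp [hd2, ha, hb]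
      · have h2 : P d.snd := by
          by_contra h2
          exact hd ⟨fun h => absurd h h1, fun h => absurd h h2⟩
        obtain ⟨ha, hb⟩ := hcore d.snd d.fst d.adj.symm h2 h1
        left; ext <;> simp [hd1, ha, hb]
    have hnocross : ∀ {x y : V} (c0 : T.Walk x y), d1 ∉ c0.darts → d2 ∉ c0.darts →
        ∀ z ∈ c0.support, (P z ↔ P x) := by
      intro x y c0 hnd1 hnd2
      refine const_on P c0 (fun d hd => ?_)
      by_contra hcon
      rcases hcross d hcon with rfl | rfl
      · exact hnd1 hd
      · exact hnd2 hd
    -- split p at d1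
    obtain ⟨q1, q2, hp1⟩ := split_at_dart p d1 (hall d1)
    have hdarts : p.darts = q1.darts ++ d1 :: q2.darts := by
      rw [hp1, Walk.darts_append, Walk.darts_cons]
    rw [hdarts] at hp
    have hnd := hp
    rw [List.nodup_append] at hnd
    have hd1q1 : d1 ∉ q1.darts := fun h => hnd.2.2 _ h _ List.mem_cons_self rfl
    have hd1q2 : d1 ∉ q2.darts := (List.nodup_cons.mp hnd.2.1).1
    have hd1d2 : d1 ≠ d2 := by
      intro h
      have := congrArg (fun d : T.Dart => d.fst) h
      exact hadj.ne (this.symm)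
    -- d2 must be in q2
    have hd2q2 : d2 ∈ q2.darts := by
      have hd2p : d2 ∈ p.darts := hall d2
      rw [hdarts, List.mem_append, List.mem_cons] at hd2p
      rcases hd2p with h | h | h
      · -- d2 in q1: contradiction
        exfalso
        obtain ⟨s1, s2, hq1eq⟩ := split_at_dart q1 d2 h
        have hs1d1 : d1 ∉ s1.darts := by
          intro hm
          apply hd1q1
          rw [hq1eq, Walk.darts_append]
          exact List.mem_append_left _ hm
        have hs1d2 : d2 ∉ s1.darts := by
          intro hm
          have : q1.darts.Nodup := hnd.1
          rw [hq1eq, Walk.darts_append, Walk.darts_cons] at this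
          rw [List.nodup_append] at this
          exact this.2.2 _ hm _ List.mem_cons_self rfl
        have := hnocross s1 hs1d1 hs1d2 v (Walk.end_mem_support s1)
        rw [this] at hPv
        exact hPr hPv
      · exact absurd h.symm hd1d2
      · exact h
    -- split q2 at d2
    obtain ⟨t1, t2, hq2eq⟩ := split_at_dart q2 d2 hd2q2
    have hq2darts : q2.darts = t1.darts ++ d2 :: t2.darts := by
      rw [hq2eq, Walk.darts_append, Walk.darts_cons]
    have hq2nd : q2.darts.Nodup := (List.nodup_cons.mp hnd.2.1).2
    rw [hq2darts] at hq2nd hd1q2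
    rw [List.nodup_append] at hq2nd
    have hd2t1 : d2 ∉ t1.darts := fun h => hq2nd.2.2 _ h _ List.mem_cons_self rfl
    have hd2t2 : d2 ∉ t2.darts := (List.nodup_cons.mp hq2nd.2.1).1
    have hd1t1 : d1 ∉ t1.darts := fun h => hd1q2 (List.mem_append_left _ h)
    have hd1t2 : d1 ∉ t2.darts := fun h => hd1q2 (List.mem_append_right _ (List.mem_cons_of_mem _ h))
    -- constancy on the three pieces
    have hA : ∀ z ∈ q1.support, ¬ P z := by
      intro z hz
      rw [hnocross q1 hd1q1 (fun h => hnd.2.2 _ h _ (List.mem_cons_of_mem _ hd2q2) rfl) z hz]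
      exact hPr
    have hB : ∀ z ∈ t1.support, P z := by
      intro z hz
      rw [hnocross t1 hd1t1 hd2t1 z hz]
      exact hPv
    have hC : ∀ z ∈ t2.support, ¬ P z := by
      intro z hz
      rw [hnocross t2 hd1t2 hd2t2 z hz]
      exact hPw
    -- decomposition of the support
    have hl : p.support = q1.support ++ (t1.support ++ t2.support) := by
      rw [hp1, hq2eq]
      rw [Walk.support_append, Walk.support_cons, List.tail_cons,
        Walk.support_append, Walk.support_cons, List.tail_cons]
    set A := q1.support with hAdef
    set B := t1.support with hBdef
    set C := t2.support with hCdef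
    have hBcons : B = v :: B.tail := t1.support_eq_cons
    have hBrev : B.reverse = v :: t1.reverse.support.tail := by
      rw [← Walk.support_reverse]
      exact t1.reverse.support_eq_cons
    have hvA : v ∉ A := fun h => hA v h hPv
    have hvC : v ∉ C := fun h => hC v h hPv
    have hA1 : 0 < A.length := List.length_pos_iff.mpr q1.support_ne_nil
    have hB1 : 0 < B.length := List.length_pos_iff.mpr t1.support_ne_nil
    have hlen : p.support.length = A.length + (B.length + C.length) := by
      rw [hl]; simp
    have hlrev : p.support.reverse = C.reverse ++ (B.reverse ++ A.reverse) := by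
      rw [hl]; simp
    -- first and last occurrence of v
    have hfv : p.support.idxOf v = A.length := by
      rw [hl, List.idxOf_append_of_notMem hvA, hBcons, List.cons_append,
        List.idxOf_cons_self, Nat.add_zero]
    have hrv : p.support.reverse.idxOf v = C.length := by
      rw [hlrev, List.idxOf_append_of_notMem (by simpa using hvC), hBrev,
        List.cons_append, List.idxOf_cons_self]
      simp
    -- every vertex is in the support
    have humem : u ∈ p.support := by
      by_cases hur : u = r
      · subst hur; exact p.start_mem_support
      · obtain ⟨cu, hcu⟩ := pex u
        cases cu with
        | nil => exact absurd rfl hur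
        | cons h' cu' =>
          exact Walk.dart_fst_mem_support_of_mem_darts p (hall ⟨(u, _), h'⟩)
    rw [← hPiff u q hq]
    constructor
    · intro hPu
      have huA : u ∉ A := fun h => hA u h hPu
      have huC : u ∉ C := fun h => hC u h hPu
      constructor
      · show p.support.idxOf v ≤ p.support.idxOf u
        rw [hfv, hl, List.idxOf_append_of_notMem huA]
        exact Nat.le_add_right _ _
      · show p.support.length - 1 - _ ≤ p.support.length - 1 - _
        apply Nat.sub_le_sub_left
        rw [hrv, hlrev, List.idxOf_append_of_notMem (by simpa using huC)]
        simp [Nat.le_add_right]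
    · rintro ⟨h1, h2⟩
      by_contra hPu
      have huB : u ∉ B := fun h => hPu (hB u h)
      have huAC : u ∈ A ∨ u ∈ C := by
        rw [hl] at humem
        rcases List.mem_append.mp humem with h | h
        · exact Or.inl h
        · rcases List.mem_append.mp h with h | h
          · exact absurd h huB
          · exact Or.inr h
      rcases huAC with hu | hu
      · have : p.support.idxOf u < A.length := by
          rw [hl, List.idxOf_append_of_mem hu]
          exact List.idxOf_lt_length_iff.mpr hu
        have h1' : p.support.idxOf v ≤ p.support.idxOf u := h1
        rw [hfv] at h1'
        omega
      · have hidx : p.support.reverse.idxOf u < C.length := by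
          rw [hlrev, List.idxOf_append_of_mem (by simpa using hu)]
          simpa using List.idxOf_lt_length_iff.mpr (by simpa using hu : u ∈ C.reverse)
        have h2' : p.support.length - 1 - p.support.reverse.idxOf u ≤
            p.support.length - 1 - p.support.reverse.idxOf v := h2
        rw [hrv] at h2'
        omega
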